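/- In the lamplighter group L₂ = ℤ₂ ≀ ℤ with the automata generating set {t, ta}, for n ≥ 1 both words t^n (ta)^{−1} t^{−2n} (ta) t^n and t^{−n−1} (ta) t^{2n} (ta)^{−1} t^{−n+1} are geodesic representatives (of length 4n + 2) of the element g_n = (t^n a t^{−n})(t^{−n} a t^{n}). -/

import Mathlib

open scoped commutatorElement

/-- Relators for the lamplighter group `L_m = ℤ_m ≀ ℤ` in the wreath product
presentation `⟨a, t | a^m, [t^i a t^{-i}, t^j a t^{-j}]⟩`, where `a` is encoded
by `true` and `t` by `false`. -/
def lampRels (m : ℕ) : Set (FreeGroup Bool) :=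
  {FreeGroup.of true ^ m} ∪
  {r | ∃ i j : ℤ,
    r = ⁅FreeGroup.of false ^ i * FreeGroup.of true * FreeGroup.of false ^ (-i),
        FreeGroup.of false ^ j * FreeGroup.of true * FreeGroup.of false ^ (-j)⁆}

/-- The lamplighter group `L_m = ℤ_m ≀ ℤ`. -/
abbrev Lamp (m : ℕ) := PresentedGroup (lampRels m)

/-- The generator `a` of `L_m`. -/
noncomputable def la (m : ℕ) : Lamp m := PresentedGroup.of true

/-- The generator `t` of `L_m`. -/
noncomputable def lt (m : ℕ) : Lamp m := PresentedGroup.of false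

/-- Word length of `g` with respect to the generating set `S` (and inverses):
the least length of a list of elements of `S ∪ S⁻¹` with product `g`. -/
noncomputable def wordLength {G : Type*} [Group G] (S : Set G) (g : G) : ℕ :=
  sInf {n | ∃ l : List G, (∀ x ∈ l, x ∈ S ∨ x⁻¹ ∈ S) ∧ l.length = n ∧ l.prod = g}


/-- shift of a finsupp -/
noncomputable def sh (k : ℤ) (f : ℤ →₀ ZMod 2) : ℤ →₀ ZMod 2 :=
  Finsupp.equivMapDomain (Equiv.addRight k) f

@[simp] lemma sh_apply (k : ℤ) (f : ℤ →₀ ZMod 2) (p : ℤ) : sh k f p = f (p - k) := by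
  simp [sh, Finsupp.equivMapDomain_apply, Equiv.addRight, Equiv.subRight]
  rfl

lemma sh_add (k : ℤ) (f g : ℤ →₀ ZMod 2) : sh k (f + g) = sh k f + sh k g := by
  ext p; simp

lemma sh_sh (k m : ℤ) (f : ℤ →₀ ZMod 2) : sh k (sh m f) = sh (k + m) f := by
  ext p; simp; ring_nf

@[simp] lemma sh_zero (k : ℤ) : sh k (0 : ℤ →₀ ZMod 2) = 0 := by ext p; simp

@[simp] lemma sh_zero' (f : ℤ →₀ ZMod 2) : sh 0 f = f := by ext p; simp

lemma sh_single (k i : ℤ) (c : ZMod 2) : sh k (Finsupp.single i c) = Finsupp.single (i + k) c := by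
  ext p
  simp only [sh_apply, Finsupp.single_apply]
  split_ifs with h1 h2 h2 <;> first | rfl | omega

lemma sh_neg (k : ℤ) (f : ℤ →₀ ZMod 2) : sh k (-f) = -(sh k f) := by ext p; simp

@[ext] structure LL where
  f : ℤ →₀ ZMod 2
  pos : ℤ

noncomputable instance : One LL := ⟨⟨0, 0⟩⟩
noncomputable instance : Mul LL := ⟨fun x y => ⟨x.f + sh x.pos y.f, x.pos + y.pos⟩⟩
noncomputable instance : Inv LL := ⟨fun x => ⟨-(sh (-x.pos) x.f), -x.pos⟩⟩

@[simp] lemma LL.mul_f (x y : LL) : (x * y).f = x.f + sh x.pos y.f := rfl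
@[simp] lemma LL.mul_pos (x y : LL) : (x * y).pos = x.pos + y.pos := rfl
@[simp] lemma LL.one_f : (1 : LL).f = 0 := rfl
@[simp] lemma LL.one_pos : (1 : LL).pos = 0 := rfl
@[simp] lemma LL.inv_f (x : LL) : (x⁻¹).f = -(sh (-x.pos) x.f) := rfl
@[simp] lemma LL.inv_pos (x : LL) : (x⁻¹).pos = -x.pos := rfl

noncomputable instance : Group LL where
  mul_assoc x y z := by
    ext p
    · simp [sh_add, sh_sh, add_assoc]
    · simp [add_assoc]
  one_mul x := by ext p <;> simp
  mul_one x := by ext p <;> simp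
  inv_mul_cancel x := by
    ext p
    · simp [sh_neg, sh_sh]
    · simp

noncomputable def TT : LL := ⟨0, 1⟩
noncomputable def AA : LL := ⟨Finsupp.single 0 1, 0⟩

lemma TT_pow (n : ℕ) : TT ^ n = ⟨0, n⟩ := by
  induction n with
  | zero => rfl
  | succ k ih =>
      rw [pow_succ, ih]
      ext p <;> simp [TT]

lemma TT_zpow (i : ℤ) : TT ^ i = ⟨0, i⟩ := by
  cases i with
  | ofNat k => simpa using TT_pow k
  | negSucc k =>
      rw [zpow_negSucc, TT_pow]
      ext p <;> simp [Int.negSucc_eq]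

lemma conj_eq (i : ℤ) : TT ^ i * AA * TT ^ (-i) = ⟨Finsupp.single i 1, 0⟩ := by
  rw [TT_zpow, TT_zpow]
  ext p
  · simp only [LL.mul_f, AA, sh_single, sh_zero, zero_add, add_zero, Finsupp.coe_add,
      Pi.add_apply, Finsupp.coe_zero, Pi.zero_apply, zero_add]
  · simp [AA]

noncomputable def FG : Bool → LL := fun b => if b then AA else TT

lemma single_self_add (i : ℤ) :
    (Finsupp.single i (1 : ZMod 2)) + Finsupp.single i 1 = 0 := by
  rw [← Finsupp.single_add, show (1:ZMod 2) + 1 = 0 from rfl, Finsupp.single_zero]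

lemma hrel : ∀ r ∈ lampRels 2, (FreeGroup.lift FG) r = 1 := by
  rintro r hr
  rcases hr with rfl | ⟨i, j, rfl⟩
  · simp only [map_pow, FreeGroup.lift_apply_of, FG, if_true]
    have : AA * AA = 1 := by
      ext p
      · simp only [LL.mul_f, AA, sh_single, LL.one_f]
        rw [show (0:ℤ) + 0 = 0 by ring, single_self_add]
      · simp [AA]
    rw [pow_two, this]
  · have h1 : ∀ i : ℤ, (FreeGroup.lift FG)
        (FreeGroup.of false ^ i * FreeGroup.of true * FreeGroup.of false ^ (-i)) =
        ⟨Finsupp.single i 1, 0⟩ := by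
      intro i
      rw [map_mul, map_mul, map_zpow, map_zpow, FreeGroup.lift_apply_of, FreeGroup.lift_apply_of]
      show TT ^ i * AA * TT ^ (-i) = _
      exact conj_eq i
    rw [commutatorElement_def, map_mul, map_mul, map_mul, map_inv, map_inv, h1 i, h1 j]
    have hcomm : (⟨Finsupp.single i 1, 0⟩ : LL) * ⟨Finsupp.single j 1, 0⟩ =
        ⟨Finsupp.single j 1, 0⟩ * ⟨Finsupp.single i 1, 0⟩ := by
      ext p <;> simp [add_comm]
    rw [mul_assoc, ← mul_inv_rev, ← hcomm, mul_inv_cancel]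

noncomputable def φ : Lamp 2 →* LL := PresentedGroup.toGroup hrel

@[simp] lemma φ_t : φ (lt 2) = TT := PresentedGroup.toGroup.of hrel
@[simp] lemma φ_a : φ (la 2) = AA := PresentedGroup.toGroup.of hrel

/-- upper extent -/
noncomputable def Mx (x : LL) : ℤ :=
  (insert 0 (insert x.pos x.f.support)).max' ⟨0, by simp⟩
/-- lower extent -/
noncomputable def mx (x : LL) : ℤ :=
  (insert 0 (insert x.pos (x.f.support.image (· - 1)))).min' ⟨0, by simp⟩

lemma Mx_zero_le (x : LL) : 0 ≤ Mx x := Finset.le_max' _ _ (by simp)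
lemma Mx_pos_le (x : LL) : x.pos ≤ Mx x := Finset.le_max' _ _ (by simp)
lemma Mx_mem_le (x : LL) {p : ℤ} (h : p ∈ x.f.support) : p ≤ Mx x :=
  Finset.le_max' _ _ (by simp [h])
lemma Mx_le (x : LL) {c : ℤ} (h0 : 0 ≤ c) (hp : x.pos ≤ c)
    (hs : ∀ p ∈ x.f.support, p ≤ c) : Mx x ≤ c := by
  apply Finset.max'_le
  intro y hy
  simp only [Finset.mem_insert] at hy
  rcases hy with rfl | rfl | hy
  · exact h0
  · exact hp
  · exact hs y hy

lemma mx_le_zero (x : LL) : mx x ≤ 0 := Finset.min'_le _ _ (by simp)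
lemma mx_le_pos (x : LL) : mx x ≤ x.pos := Finset.min'_le _ _ (by simp)
lemma mx_mem_le (x : LL) {p : ℤ} (h : p ∈ x.f.support) : mx x ≤ p - 1 :=
  Finset.min'_le _ _ (by simp only [Finset.mem_insert, Finset.mem_image]; exact Or.inr (Or.inr ⟨p, h, rfl⟩))
lemma le_mx (x : LL) {c : ℤ} (h0 : c ≤ 0) (hp : c ≤ x.pos)
    (hs : ∀ p ∈ x.f.support, c ≤ p - 1) : c ≤ mx x := by
  apply Finset.le_min'
  intro y hy
  simp only [Finset.mem_insert, Finset.mem_image] at hy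
  rcases hy with rfl | rfl | ⟨p, hp', rfl⟩
  · exact h0
  · exact hp
  · exact hs p hp'

/-- lower bound potential -/
noncomputable def ψ (x : LL) : ℤ := 2 * (Mx x - mx x) - max x.pos (-x.pos)

lemma ψ_one : ψ 1 = 0 := by
  have h1 : Mx 1 = 0 := le_antisymm (Mx_le _ le_rfl le_rfl (by simp)) (Mx_zero_le _)
  have h2 : mx 1 = 0 := le_antisymm (mx_le_zero _) (le_mx _ le_rfl le_rfl (by simp))
  simp [ψ, h1, h2]

lemma psi_bound (f' : ℤ →₀ ZMod 2) (x : LL) (p' : ℤ)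
    (hp' : p' = x.pos + 1 ∨ p' = x.pos - 1)
    (hsupp : f'.support ⊆ insert (max x.pos p') x.f.support) :
    ψ ⟨f', p'⟩ ≤ ψ x + 1 := by
  have hM : Mx ⟨f', p'⟩ ≤ max (Mx x) p' := by
    apply Mx_le
    · exact le_trans (Mx_zero_le x) (le_max_left _ _)
    · exact le_max_right _ _
    · intro r hr
      rcases Finset.mem_insert.1 (hsupp hr) with rfl | hr'
      · exact max_le (le_trans (Mx_pos_le x) (le_max_left _ _)) (le_max_right _ _)
      · exact le_trans (Mx_mem_le x hr') (le_max_left _ _)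
  have hm : min (mx x) (min p' (max x.pos p' - 1)) ≤ mx ⟨f', p'⟩ := by
    apply le_mx
    · exact le_trans (min_le_left _ _) (mx_le_zero x)
    · exact le_trans (min_le_right _ _) (min_le_left _ _)
    · intro r hr
      rcases Finset.mem_insert.1 (hsupp hr) with rfl | hr'
      · exact le_trans (min_le_right _ _) (min_le_right _ _)
      · exact le_trans (min_le_left _ _) (mx_mem_le x hr')
  have b1 := Mx_pos_le x
  have b2 := Mx_zero_le x
  have b3 := mx_le_zero x
  have b4 := mx_le_pos x
  have b5 : p' ≤ Mx ⟨f', p'⟩ := Mx_pos_le ⟨f', p'⟩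
  have b6 : mx ⟨f', p'⟩ ≤ p' := mx_le_pos ⟨f', p'⟩
  show 2 * (Mx ⟨f', p'⟩ - mx ⟨f', p'⟩) - max p' (-p') ≤ 2 * (Mx x - mx x) - max x.pos (-x.pos) + 1
  omega

noncomputable def TA : LL := TT * AA

lemma TA_eq : TA = ⟨Finsupp.single 1 1, 1⟩ := by
  ext p
  · simp only [TA, LL.mul_f, TT, AA, sh_single, zero_add]
  · simp [TA, TT, AA]

lemma psi_step (x s : LL) (hs : s = TT ∨ s = TT⁻¹ ∨ s = TA ∨ s = TA⁻¹) :
    ψ (x * s) ≤ ψ x + 1 := by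
  rcases hs with rfl | rfl | rfl | rfl
  · have e : x * TT = ⟨x.f, x.pos + 1⟩ := by ext p <;> simp [TT]
    rw [e]
    exact psi_bound _ x _ (Or.inl rfl) (fun r hr => Finset.mem_insert_of_mem hr)
  · have e : x * TT⁻¹ = ⟨x.f, x.pos - 1⟩ := by ext p <;> simp [TT] <;> ring
    rw [e]
    exact psi_bound _ x _ (Or.inr rfl) (fun r hr => Finset.mem_insert_of_mem hr)

  · have e : x * TA = ⟨x.f + Finsupp.single (x.pos + 1) 1, x.pos + 1⟩ := by
      rw [TA_eq]
      ext p
      · simp only [LL.mul_f, sh_single]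
        rw [add_comm (1:ℤ) x.pos]
      · simp
    rw [e]
    apply psi_bound _ x _ (Or.inl rfl)
    intro r hr
    rcases Finset.mem_union.1 (Finsupp.support_add hr) with hr' | hr'
    · exact Finset.mem_insert_of_mem hr'
    · have := Finsupp.support_single_subset hr'
      simp only [Finset.mem_singleton] at this
      subst this
      simp only [Finset.mem_insert]
      left
      omega
  · have e : x * TA⁻¹ = ⟨x.f + Finsupp.single x.pos 1, x.pos - 1⟩ := by
      rw [TA_eq]
      ext p
      · simp only [LL.mul_f, LL.inv_f, LL.inv_pos, sh_neg, sh_single, Finsupp.coe_add,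
          Pi.add_apply, sh_apply, Finsupp.coe_neg, Pi.neg_apply]
        rw [show (1:ℤ) + -1 + x.pos = x.pos by ring]
        congr 1
        have : (-(Finsupp.single x.pos (1:ZMod 2))) p = -(Finsupp.single x.pos (1:ZMod 2) p) := rfl
        rw [show (-(Finsupp.single x.pos (1:ZMod 2) p)) = Finsupp.single x.pos (1:ZMod 2) p from by
          rcases eq_or_ne x.pos p with h | h
          · rw [h, Finsupp.single_eq_same]; decide
          · rw [Finsupp.single_eq_of_ne' h]; decide] at this
        exact this
      · simp [TA_eq]; ring
    rw [e]
    apply psi_bound _ x _ (Or.inr rfl)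
    intro r hr
    rcases Finset.mem_union.1 (Finsupp.support_add hr) with hr' | hr'
    · exact Finset.mem_insert_of_mem hr'
    · have := Finsupp.support_single_subset hr'
      simp only [Finset.mem_singleton] at this
      subst this
      simp only [Finset.mem_insert]
      left
      omega

lemma psi_prod_le (l : List LL) (h : ∀ s ∈ l, s = TT ∨ s = TT⁻¹ ∨ s = TA ∨ s = TA⁻¹) :
    ψ l.prod ≤ (l.length : ℤ) := by
  induction l using List.reverseRecOn with
  | nil => simp [ψ_one]
  | append_singleton l s ih =>
      rw [List.prod_append, List.prod_singleton]
      have h1 := psi_step l.prod s (h s (by simp))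
      have h2 := ih (fun x hx => h x (by simp [hx]))
      simp only [List.length_append, List.length_singleton]
      push_cast
      omega

lemma rel_one {r : FreeGroup Bool} (hr : r ∈ lampRels 2) : PresentedGroup.mk (lampRels 2) r = 1 := by
  have h : r ∈ Subgroup.normalClosure (lampRels 2) := Subgroup.subset_normalClosure hr
  exact (QuotientGroup.eq_one_iff r).2 h

lemma la_sq : la 2 * la 2 = 1 := by
  have : ((PresentedGroup.mk (lampRels 2)) (FreeGroup.of true ^ 2) : Lamp 2) = 1 :=
    rel_one (Or.inl rfl)
  rw [map_pow, pow_two] at this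
  exact this

lemma la_inv : (la 2)⁻¹ = la 2 := inv_eq_of_mul_eq_one_right la_sq

lemma lamp_comm (i j : ℤ) :
    (lt 2 ^ i * la 2 * lt 2 ^ (-i)) * (lt 2 ^ j * la 2 * lt 2 ^ (-j)) =
    (lt 2 ^ j * la 2 * lt 2 ^ (-j)) * (lt 2 ^ i * la 2 * lt 2 ^ (-i)) := by
  have : ((PresentedGroup.mk (lampRels 2))
      ⁅FreeGroup.of false ^ i * FreeGroup.of true * FreeGroup.of false ^ (-i),
        FreeGroup.of false ^ j * FreeGroup.of true * FreeGroup.of false ^ (-j)⁆ : Lamp 2) = 1 :=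
    rel_one (Or.inr ⟨i, j, rfl⟩)
  rw [map_commutatorElement] at this
  simp only [map_mul, map_zpow] at this
  exact commutatorElement_eq_one_iff_mul_comm.1 this

section KeyIdent
variable {G : Type*} [Group G]

lemma key1 (t a : G) (n : ℕ) (ha : a⁻¹ = a) :
    t ^ n * (t * a)⁻¹ * (t⁻¹) ^ (2 * n) * (t * a) * t ^ n =
      t ^ n * a * (t ^ n)⁻¹ * ((t ^ n)⁻¹ * a * t ^ n) := by
  rw [mul_inv_rev, ha]
  group

lemma key2 (t a : G) (m : ℕ) (ha : a⁻¹ = a)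
    (hc : (t ^ ((m + 1 : ℕ) : ℤ) * a * t ^ (-((m + 1 : ℕ) : ℤ))) *
        (t ^ (-((m + 1 : ℕ) : ℤ)) * a * t ^ ((m + 1 : ℕ) : ℤ)) =
      (t ^ (-((m + 1 : ℕ) : ℤ)) * a * t ^ ((m + 1 : ℕ) : ℤ)) *
        (t ^ ((m + 1 : ℕ) : ℤ) * a * t ^ (-((m + 1 : ℕ) : ℤ)))) :
    (t⁻¹) ^ (m + 1 + 1) * (t * a) * t ^ (2 * (m + 1)) * (t * a)⁻¹ * (t⁻¹) ^ m =
      t ^ (m + 1) * a * (t ^ (m + 1))⁻¹ * ((t ^ (m + 1))⁻¹ * a * t ^ (m + 1)) := by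
  rw [mul_inv_rev, ha]
  calc (t⁻¹) ^ (m + 1 + 1) * (t * a) * t ^ (2 * (m + 1)) * (a * t⁻¹) * (t⁻¹) ^ m
      = (t ^ (-((m + 1 : ℕ) : ℤ)) * a * t ^ ((m + 1 : ℕ) : ℤ)) *
        (t ^ ((m + 1 : ℕ) : ℤ) * a * t ^ (-((m + 1 : ℕ) : ℤ))) := by
        push_cast
        group
    _ = (t ^ ((m + 1 : ℕ) : ℤ) * a * t ^ (-((m + 1 : ℕ) : ℤ))) *
        (t ^ (-((m + 1 : ℕ) : ℤ)) * a * t ^ ((m + 1 : ℕ) : ℤ)) := hc.symm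
    _ = t ^ (m + 1) * a * (t ^ (m + 1))⁻¹ * ((t ^ (m + 1))⁻¹ * a * t ^ (m + 1)) := by
        push_cast
        group

end KeyIdent

lemma φ_g (n : ℕ) :
    φ (lt 2 ^ n * la 2 * (lt 2 ^ n)⁻¹ * ((lt 2 ^ n)⁻¹ * la 2 * lt 2 ^ n)) =
      ⟨Finsupp.single (n : ℤ) 1 + Finsupp.single (-(n : ℤ)) 1, 0⟩ := by
  simp only [map_mul, map_pow, map_inv, φ_t, φ_a]
  have h1 : TT ^ n = TT ^ ((n : ℕ) : ℤ) := (zpow_natCast _ _).symm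
  have h2 : (TT ^ ((n : ℕ) : ℤ))⁻¹ = TT ^ (-((n : ℕ) : ℤ)) := by rw [← zpow_neg]
  rw [h1, h2]
  have e1 : TT ^ ((n : ℕ) : ℤ) * AA * TT ^ (-((n : ℕ) : ℤ)) =
      ⟨Finsupp.single (n : ℤ) 1, 0⟩ := conj_eq _
  have e2 : TT ^ (-((n : ℕ) : ℤ)) * AA * TT ^ ((n : ℕ) : ℤ) =
      ⟨Finsupp.single (-(n : ℤ)) 1, 0⟩ := by
    have := conj_eq (-((n : ℕ) : ℤ))
    rwa [neg_neg] at this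
  rw [e1, e2]
  ext p
  · simp
  · simp

lemma psi_g (n : ℕ) (hn : 1 ≤ n) :
    ψ ⟨Finsupp.single (n : ℤ) 1 + Finsupp.single (-(n : ℤ)) 1, 0⟩ = 4 * (n : ℤ) + 2 := by
  set x : LL := ⟨Finsupp.single (n : ℤ) 1 + Finsupp.single (-(n : ℤ)) 1, 0⟩ with hx
  have hne : (n : ℤ) ≠ -(n : ℤ) := by omega
  have hsupp : x.f.support = {(n : ℤ), -(n : ℤ)} := by
    have : x.f = Finsupp.single (n : ℤ) 1 + Finsupp.single (-(n : ℤ)) 1 := rfl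
    rw [this, Finsupp.support_add_eq]
    · rw [Finsupp.support_single_ne_zero _ one_ne_zero,
        Finsupp.support_single_ne_zero _ one_ne_zero]
      rfl
    · rw [Finsupp.support_single_ne_zero _ one_ne_zero,
        Finsupp.support_single_ne_zero _ one_ne_zero]
      simp only [Finset.disjoint_singleton]
      omega
  have hpos : x.pos = 0 := rfl
  have hM : Mx x = (n : ℤ) := by
    apply le_antisymm
    · apply Mx_le _ (by omega) (by omega)
      intro p hp
      rw [hsupp] at hp
      simp only [Finset.mem_insert, Finset.mem_singleton] at hp
      rcases hp with rfl | rfl <;> omega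
    · exact Mx_mem_le x (by rw [hsupp]; simp)
  have hm : mx x = -(n : ℤ) - 1 := by
    apply le_antisymm
    · have := mx_mem_le x (p := -(n : ℤ)) (by rw [hsupp]; simp)
      omega
    · apply le_mx _ (by omega) (by omega)
      intro p hp
      rw [hsupp] at hp
      simp only [Finset.mem_insert, Finset.mem_singleton] at hp
      rcases hp with rfl | rfl <;> omega
  rw [ψ, hM, hm, hpos]
  simp
  ring

/-- In `L₂` with the automata generating set `{t, ta}`, for `n ≥ 1` both words
`tⁿ (ta)⁻¹ t⁻²ⁿ (ta) tⁿ` and `t⁻ⁿ⁻¹ (ta) t²ⁿ (ta)⁻¹ t⁻ⁿ⁺¹` are geodesic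
representatives, of length `4n + 2`, of `gₙ = (tⁿ a t⁻ⁿ)(t⁻ⁿ a tⁿ)`. -/
theorem lamplighter_automata_gn_geodesics (n : ℕ) (hn : 1 ≤ n) :
    letI S : Set (Lamp 2) := {lt 2, lt 2 * la 2}
    letI a := la 2
    letI t := lt 2
    letI g := t ^ n * a * (t ^ n)⁻¹ * ((t ^ n)⁻¹ * a * t ^ n)
    letI w1 := List.replicate n t ++ [(t * a)⁻¹] ++ List.replicate (2 * n) t⁻¹ ++
      [t * a] ++ List.replicate n t
    letI w2 := List.replicate (n + 1) t⁻¹ ++ [t * a] ++ List.replicate (2 * n) t ++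
      [(t * a)⁻¹] ++ List.replicate (n - 1) t⁻¹
    wordLength S g = 4 * n + 2 ∧
    (∀ x ∈ w1, x ∈ S ∨ x⁻¹ ∈ S) ∧ w1.prod = g ∧ w1.length = 4 * n + 2 ∧
      w1.length = wordLength S g ∧
    (∀ x ∈ w2, x ∈ S ∨ x⁻¹ ∈ S) ∧ w2.prod = g ∧ w2.length = 4 * n + 2 ∧
      w2.length = wordLength S g := by
  obtain ⟨m, rfl⟩ : ∃ m, n = m + 1 := ⟨n - 1, by omega⟩
  set S : Set (Lamp 2) := {lt 2, lt 2 * la 2} with hS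
  set t := lt 2 with ht
  set a := la 2 with hA
  set g := t ^ (m + 1) * a * (t ^ (m + 1))⁻¹ * ((t ^ (m + 1))⁻¹ * a * t ^ (m + 1)) with hg
  have ha : a⁻¹ = a := la_inv
  -- membership in generators
  have htS : t ∈ S ∨ t⁻¹ ∈ S := Or.inl (Or.inl rfl)
  have htiS : t⁻¹ ∈ S ∨ (t⁻¹)⁻¹ ∈ S := Or.inr (by rw [inv_inv]; exact Or.inl rfl)
  have htaS : t * a ∈ S ∨ (t * a)⁻¹ ∈ S := Or.inl (Or.inr rfl)
  have htaiS : (t * a)⁻¹ ∈ S ∨ ((t * a)⁻¹)⁻¹ ∈ S := Or.inr (by rw [inv_inv]; exact Or.inr rfl)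
  have hmem1 : ∀ x ∈ List.replicate (m + 1) t ++ [(t * a)⁻¹] ++
      List.replicate (2 * (m + 1)) t⁻¹ ++ [t * a] ++ List.replicate (m + 1) t,
      x ∈ S ∨ x⁻¹ ∈ S := by
    intro x hx
    simp only [List.mem_append, List.mem_replicate, List.mem_singleton] at hx
    rcases hx with ((((⟨_, rfl⟩ | rfl) | ⟨_, rfl⟩) | rfl) | ⟨_, rfl⟩)
    exacts [htS, htaiS, htiS, htaS, htS]
  have hmem2 : ∀ x ∈ List.replicate (m + 1 + 1) t⁻¹ ++ [t * a] ++
      List.replicate (2 * (m + 1)) t ++ [(t * a)⁻¹] ++ List.replicate (m + 1 - 1) t⁻¹,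
      x ∈ S ∨ x⁻¹ ∈ S := by
    intro x hx
    simp only [List.mem_append, List.mem_replicate, List.mem_singleton] at hx
    rcases hx with ((((⟨_, rfl⟩ | rfl) | ⟨_, rfl⟩) | rfl) | ⟨_, rfl⟩)
    exacts [htiS, htaS, htS, htaiS, htiS]
  -- products
  have hprod1 : (List.replicate (m + 1) t ++ [(t * a)⁻¹] ++
      List.replicate (2 * (m + 1)) t⁻¹ ++ [t * a] ++ List.replicate (m + 1) t).prod = g := by
    simp only [List.prod_append, List.prod_replicate, List.prod_singleton]
    exact key1 t a (m + 1) ha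
  have hprod2 : (List.replicate (m + 1 + 1) t⁻¹ ++ [t * a] ++
      List.replicate (2 * (m + 1)) t ++ [(t * a)⁻¹] ++ List.replicate (m + 1 - 1) t⁻¹).prod
      = g := by
    simp only [List.prod_append, List.prod_replicate, List.prod_singleton,
      Nat.add_sub_cancel]
    apply key2 t a m ha
    have := lamp_comm ((m + 1 : ℕ) : ℤ) (-((m + 1 : ℕ) : ℤ))
    rwa [neg_neg] at this
  -- lengths
  have hlen1 : (List.replicate (m + 1) t ++ [(t * a)⁻¹] ++
      List.replicate (2 * (m + 1)) t⁻¹ ++ [t * a] ++ List.replicate (m + 1) t).length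
      = 4 * (m + 1) + 2 := by
    simp [List.length_append, List.length_replicate]
    omega
  have hlen2 : (List.replicate (m + 1 + 1) t⁻¹ ++ [t * a] ++
      List.replicate (2 * (m + 1)) t ++ [(t * a)⁻¹] ++ List.replicate (m + 1 - 1) t⁻¹).length
      = 4 * (m + 1) + 2 := by
    simp [List.length_append, List.length_replicate]
    omega
  -- lower bound
  have hlow : ∀ k ∈ {k | ∃ l : List (Lamp 2), (∀ x ∈ l, x ∈ S ∨ x⁻¹ ∈ S) ∧
      l.length = k ∧ l.prod = g}, 4 * (m + 1) + 2 ≤ k := by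
    rintro k ⟨l, hl, rfl, hlp⟩
    have hmap : ∀ s ∈ l.map φ, s = TT ∨ s = TT⁻¹ ∨ s = TA ∨ s = TA⁻¹ := by
      intro s hs
      rcases List.mem_map.1 hs with ⟨x, hx, rfl⟩
      rcases hl x hx with h | h
      · rcases h with rfl | rfl
        · exact Or.inl φ_t
        · refine Or.inr (Or.inr (Or.inl ?_))
          rw [map_mul, φ_t, φ_a]; rfl
      · rcases h with h | h
        · have : x = t⁻¹ := by rw [ht, ← h, inv_inv]
          subst this
          exact Or.inr (Or.inl (by rw [map_inv, φ_t]))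
        · have : x = (t * a)⁻¹ := by rw [ht, hA, ← h, inv_inv]
          subst this
          refine Or.inr (Or.inr (Or.inr ?_))
          rw [map_inv, map_mul, φ_t, φ_a]; rfl
    have hψ := psi_prod_le (l.map φ) hmap
    rw [← map_list_prod φ l, hlp, hg, φ_g (m + 1)] at hψ
    rw [psi_g (m + 1) (by omega)] at hψ
    simp only [List.length_map] at hψ
    have hfin : ((4 * (m + 1) + 2 : ℕ) : ℤ) ≤ (l.length : ℤ) := by push_cast at hψ ⊢; omega
    exact_mod_cast hfin
  have hmemset : (4 * (m + 1) + 2) ∈ {k | ∃ l : List (Lamp 2), (∀ x ∈ l, x ∈ S ∨ x⁻¹ ∈ S) ∧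
      l.length = k ∧ l.prod = g} := ⟨_, hmem1, hlen1, hprod1⟩
  have hwl : wordLength S g = 4 * (m + 1) + 2 := by
    apply le_antisymm
    · exact Nat.sInf_le hmemset
    · exact le_csInf ⟨_, hmemset⟩ hlow
  refine ⟨hwl, hmem1, hprod1, hlen1, by rw [hlen1, hwl], hmem2, hprod2, hlen2, by rw [hlen2, hwl]⟩
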